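/- arXiv:1811.02920 — 2 statements merged into one kernel-verified Lean document; each statement's English description precedes it below -/
import Mathlib

section
/- Let G be a plane graph in which no 4-cycle is adjacent to a 5-cycle. Then every vertex v of G of degree at least 4 is incident to at most d_G(v)−2 faces of length 3. -/
open SimpleGraph

universe u

variable {V : Type u}

/-! ### Basic notions: degree, adjacent cycles, good/bad cycles -/

/-- The degree of a vertex, as the cardinality of its neighbour set. -/
noncomputable def gdeg (G : SimpleGraph V) (v : V) : ℕ := Nat.card (G.neighborSet v)

/-- Two closed walks (cycles) share at least one edge. -/
def ShareEdge {G : SimpleGraph V} {a b : V} (c1 : G.Walk a a) (c2 : G.Walk b b) : Prop :=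
  ∃ e : Sym2 V, e ∈ c1.edges ∧ e ∈ c2.edges

/-- In `G`, no cycle of length `k` is adjacent to (shares an edge with) a cycle of length `l`. -/
def NoAdjCycles (G : SimpleGraph V) (k l : ℕ) : Prop :=
  ∀ (a b : V) (c1 : G.Walk a a) (c2 : G.Walk b b),
    c1.IsCycle → c2.IsCycle → c1.length = k → c2.length = l → ¬ ShareEdge c1 c2

/-- A cycle `C` is bad if some vertex of degree at least 4 outside `C`
has at least four neighbours on `C`. -/
def IsBadCycle (G : SimpleGraph V) {a : V} (C : G.Walk a a) : Prop :=
  ∃ w : V, w ∉ C.support ∧ 4 ≤ gdeg G w ∧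
    4 ≤ Nat.card {u : V | u ∈ C.support ∧ G.Adj w u}

/-- A cycle is good if it is not bad. -/
def IsGoodCycle (G : SimpleGraph V) {a : V} (C : G.Walk a a) : Prop := ¬ IsBadCycle G C

/-! ### Combinatorial plane embeddings via rotation systems -/

/-- Reversal of darts, as a permutation. -/
def dartReversal (G : SimpleGraph V) : Equiv.Perm G.Dart where
  toFun := SimpleGraph.Dart.symm
  invFun := SimpleGraph.Dart.symm
  left_inv d := SimpleGraph.Dart.symm_symm d
  right_inv d := SimpleGraph.Dart.symm_symm d

/-- The face-tracing permutation of a rotation system: follow a dart, turn around,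
and take the next outgoing dart in the rotation. Its orbits are the faces. -/
def facePerm {G : SimpleGraph V} (rot : Equiv.Perm G.Dart) : Equiv.Perm G.Dart :=
  (dartReversal G).trans rot

/-- The setoid identifying elements in the same cycle (orbit) of a permutation. -/
def sameCycleSetoid {α : Type*} (f : Equiv.Perm α) : Setoid α :=
  ⟨f.SameCycle, ⟨fun x => Equiv.Perm.SameCycle.refl f x,
    fun h => h.symm, fun h h' => h.trans h'⟩⟩

/-- A (combinatorial) plane embedding of a finite graph `G`: a rotation system
(a permutation of the darts preserving tails and acting with a single cycle on
the darts at each vertex) whose face count satisfies Euler's formula for the plane;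
the faces are the orbits of the face-tracing permutation, and isolated vertices
are accounted for separately. -/
structure PlaneEmbedding [Fintype V] (G : SimpleGraph V) where
  rot : Equiv.Perm G.Dart
  rot_fst : ∀ d : G.Dart, (rot d).fst = d.fst
  rot_cycle : ∀ d d' : G.Dart, d.fst = d'.fst → rot.SameCycle d d'
  euler : (Fintype.card V : ℤ) - (Nat.card G.edgeSet : ℤ)
        + (Nat.card (Quotient (sameCycleSetoid (facePerm rot))) : ℤ)
      = 2 * (Nat.card G.ConnectedComponent : ℤ)
        - (Nat.card {v : V | ∀ w : V, ¬ G.Adj v w} : ℤ)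

/-- A graph is planar if it admits a plane embedding. -/
def IsPlanar [Fintype V] (G : SimpleGraph V) : Prop := Nonempty (PlaneEmbedding G)

namespace PlaneEmbedding

variable [Fintype V] {G : SimpleGraph V} (E : PlaneEmbedding G)

/-- Two darts lie on the same face. -/
def SameFace (d d' : G.Dart) : Prop := (facePerm E.rot).SameCycle d d'

/-- The length of the face containing the dart `d`, i.e. the length of its
boundary closed walk. -/
noncomputable def faceLength (d : G.Dart) : ℕ :=
  Function.minimalPeriod (⇑(facePerm E.rot)) d

/-- The vertex `v` lies on (the boundary of) the face of the dart `d`. -/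
def VertexOnFace (v : V) (d : G.Dart) : Prop := ∃ d' : G.Dart, E.SameFace d d' ∧ d'.fst = v

/-- The faces of the darts `d` and `e` are distinct and share at least one edge. -/
def AdjFaces (d e : G.Dart) : Prop :=
  ¬ E.SameFace d e ∧ ∃ d' : G.Dart, E.SameFace d d' ∧ E.SameFace e d'.symm

/-- The number of faces of length 3 incident with the vertex `v`. -/
noncomputable def numTriFacesAt (v : V) : ℕ :=
  Nat.card {f : Quotient (sameCycleSetoid (facePerm E.rot)) //
    ∃ d : G.Dart, Quotient.mk (sameCycleSetoid (facePerm E.rot)) d = f ∧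
      d.fst = v ∧ E.faceLength d = 3}

/-- `s` is a set of darts representing pairwise distinct 3-faces which are
connected through shared edges: a `T_i`-subgraph with `i = s.card`. -/
def IsTSubgraph (s : Finset G.Dart) : Prop :=
  (∀ d ∈ s, E.faceLength d = 3) ∧
  (∀ d ∈ s, ∀ d' ∈ s, d ≠ d' → ¬ E.SameFace d d') ∧
  (∀ d ∈ s, ∀ d' ∈ s,
    Relation.ReflTransGen (fun x y => x ∈ s ∧ y ∈ s ∧ E.AdjFaces x y) d d')

/-- The vertices of the union of the faces represented by `s`. -/
def TVertices (s : Finset G.Dart) : Set V := {v | ∃ d ∈ s, E.VertexOnFace v d}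

/-- The edges of the union of the faces represented by `s`. -/
def TEdges (s : Finset G.Dart) : Set (Sym2 V) :=
  {e | ∃ d ∈ s, ∃ d' : G.Dart, E.SameFace d d' ∧ d'.edge = e}

/-- The subgraph of `G` formed by the union of the faces represented by `s`. -/
def TGraph (s : Finset G.Dart) : SimpleGraph (E.TVertices s) where
  Adj x y := x ≠ y ∧ s((x : V), (y : V)) ∈ E.TEdges s
  symm := ⟨fun x y h => ⟨h.1.symm, by rw [Sym2.eq_swap]; exact h.2⟩⟩
  loopless := ⟨fun x h => h.1 rfl⟩

/-- The face of the dart `d0` is bounded by the cycle `C`: it has the same length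
as `C` and all its boundary edges are edges of `C`. -/
def FaceBoundedBy (d0 : G.Dart) {a : V} (C : G.Walk a a) : Prop :=
  E.faceLength d0 = C.length ∧ ∀ d' : G.Dart, E.SameFace d0 d' → d'.edge ∈ C.edges

/-- The cycle `C` is separating in the embedding `E`: there are two vertices not on
`C` (witnessed by darts at them) whose faces cannot be connected to each other by
moving along faces and crossing edges not on `C`; equivalently, the interior and the
exterior of `C` both contain a vertex of `G`. -/
def IsSeparating {a : V} (C : G.Walk a a) : Prop :=
  ∃ d e : G.Dart, d.fst ∉ C.support ∧ e.fst ∉ C.support ∧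
    ¬ Relation.ReflTransGen
        (fun x y => E.SameFace x y ∨ (y = x.symm ∧ x.edge ∉ C.edges)) d e

end PlaneEmbedding

/-- The wheel `W_4`: a 4-cycle `1 2 3 4` together with a centre `0` joined to all
four cycle vertices. -/
def wheelW4 : SimpleGraph (Fin 5) :=
  SimpleGraph.fromRel (fun a b =>
    (a, b) ∈ ({(0,1),(0,2),(0,3),(0,4),(1,2),(2,3),(3,4),(4,1)} : Set (Fin 5 × Fin 5)))

/-! ### DP-colouring -/

/-- A matching assignment for the graph `G` and list assignment `L`: for every edge
`uv` a (partial) matching between `{u} × L u` and `{v} × L v`. -/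
structure MatchingAssignment (G : SimpleGraph V) (L : V → Finset ℕ) where
  rel : ∀ ⦃u v : V⦄, G.Adj u v → ℕ → ℕ → Prop
  mem_left : ∀ ⦃u v : V⦄ (h : G.Adj u v) ⦃a b : ℕ⦄, rel h a b → a ∈ L u
  mem_right : ∀ ⦃u v : V⦄ (h : G.Adj u v) ⦃a b : ℕ⦄, rel h a b → b ∈ L v
  symm : ∀ ⦃u v : V⦄ (h : G.Adj u v) (a b : ℕ), rel h a b ↔ rel h.symm b a
  right_unique : ∀ ⦃u v : V⦄ (h : G.Adj u v) ⦃a b b' : ℕ⦄, rel h a b → rel h a b' → b = b'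
  left_unique : ∀ ⦃u v : V⦄ (h : G.Adj u v) ⦃a a' b : ℕ⦄, rel h a b → rel h a' b → a = a'

/-- The cover graph `H_L`: vertices are pairs `(v, c)` with `c ∈ L v`; each set
`{v} × L v` is a clique, and between `{u} × L u` and `{v} × L v` (for `uv ∈ E(G)`)
there are exactly the edges of the matching `M_{uv}`. -/
def Cover {G : SimpleGraph V} {L : V → Finset ℕ} (M : MatchingAssignment G L) :
    SimpleGraph {p : V × ℕ // p.2 ∈ L p.1} where
  Adj x y := x ≠ y ∧
    ((x : V × ℕ).1 = (y : V × ℕ).1 ∨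
      ∃ h : G.Adj (x : V × ℕ).1 (y : V × ℕ).1, M.rel h (x : V × ℕ).2 (y : V × ℕ).2)
  symm := by
    constructor
    rintro x y ⟨hxy, h | ⟨hadj, hrel⟩⟩
    · exact ⟨hxy.symm, Or.inl h.symm⟩
    · exact ⟨hxy.symm, Or.inr ⟨hadj.symm, (M.symm hadj _ _).1 hrel⟩⟩
  loopless := ⟨fun x h => h.1 rfl⟩

/-- A set of vertices of the cover graph is independent. -/
def CoverIndep {G : SimpleGraph V} {L : V → Finset ℕ} (M : MatchingAssignment G L)
    (s : Set {p : V × ℕ // p.2 ∈ L p.1}) : Prop :=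
  ∀ ⦃x⦄, x ∈ s → ∀ ⦃y⦄, y ∈ s → ¬ (Cover M).Adj x y

/-- `G` has an `M_L`-colouring: an independent set of size `|V(G)|` in the cover graph. -/
def HasMLColoring [Fintype V] {G : SimpleGraph V} {L : V → Finset ℕ}
    (M : MatchingAssignment G L) : Prop :=
  ∃ s : Set {p : V × ℕ // p.2 ∈ L p.1}, CoverIndep M s ∧ Nat.card s = Fintype.card V

/-- `G` is DP-`k`-colourable. -/
def DPColorable [Fintype V] (G : SimpleGraph V) (k : ℕ) : Prop :=
  ∀ L : V → Finset ℕ, (∀ v, k ≤ (L v).card) →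
    ∀ M : MatchingAssignment G L, HasMLColoring M

/-- `φ0` is a pre-colouring of the cycle `C`: it picks a colour from the list of each
vertex of `C`, and the chosen pairs form an independent set in the cover graph. -/
def IsPrecoloring {G : SimpleGraph V} {L : V → Finset ℕ} (M : MatchingAssignment G L)
    {a : V} (C : G.Walk a a) (φ0 : V → ℕ) : Prop :=
  (∀ v ∈ C.support, φ0 v ∈ L v) ∧
  ∀ u ∈ C.support, ∀ v ∈ C.support, ∀ h : G.Adj u v, ¬ M.rel h (φ0 u) (φ0 v)

/-- The pre-colouring `φ0` of the cycle `C` extends to an `M_L`-colouring of `G`. -/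
def ExtendsTo [Fintype V] {G : SimpleGraph V} {L : V → Finset ℕ}
    (M : MatchingAssignment G L) {a : V} (C : G.Walk a a) (φ0 : V → ℕ) : Prop :=
  ∃ s : Set {p : V × ℕ // p.2 ∈ L p.1},
    CoverIndep M s ∧ Nat.card s = Fintype.card V ∧
    ∀ v ∈ C.support, ∃ p ∈ s, (p : V × ℕ) = (v, φ0 v)

/-- `G` is `k`-choosable. -/
def Choosable (G : SimpleGraph V) (k : ℕ) : Prop :=
  ∀ L : V → Finset ℕ, (∀ v, k ≤ (L v).card) →
    ∃ c : V → ℕ, (∀ v, c v ∈ L v) ∧ ∀ ⦃u v : V⦄, G.Adj u v → c u ≠ c v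

/-- A counterexample to the extension statement for planar graphs with no 4-cycle
adjacent to a 5-cycle, on the vertex set `Fin n`. -/
def IsCex1 (n : ℕ) (G : SimpleGraph (Fin n)) : Prop :=
  IsPlanar G ∧ NoAdjCycles G 4 5 ∧
  ∃ (a : Fin n) (C : G.Walk a a) (L : Fin n → Finset ℕ)
      (M : MatchingAssignment G L) (φ0 : Fin n → ℕ),
    C.IsCycle ∧ C.length ≤ 7 ∧ (∀ v, 4 ≤ (L v).card) ∧
    IsPrecoloring M C φ0 ∧ ¬ ExtendsTo M C φ0

/-- A counterexample to the extension statement for planar graphs with no 4-cycle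
adjacent to a 6-cycle, on the vertex set `Fin n`. -/
def IsCex2 (n : ℕ) (G : SimpleGraph (Fin n)) : Prop :=
  IsPlanar G ∧ NoAdjCycles G 4 6 ∧
  ∃ (a : Fin n) (C : G.Walk a a) (L : Fin n → Finset ℕ)
      (M : MatchingAssignment G L) (φ0 : Fin n → ℕ),
    C.IsCycle ∧ IsGoodCycle G C ∧ C.length ≤ 8 ∧ (∀ v, 4 ≤ (L v).card) ∧
    IsPrecoloring M C φ0 ∧ ¬ ExtendsTo M C φ0

/-- The graph obtained from `G - {v, v2, v4}` by identifying `v1` and `v3`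
(the merged vertex is `v1`; the vertices `v, v2, v4, v3` become isolated). -/
def identGraph (G : SimpleGraph V) (v v2 v4 v1 v3 : V) : SimpleGraph V :=
  SimpleGraph.fromRel fun x y =>
    x ∉ ({v, v2, v4} : Set V) ∧ y ∉ ({v, v2, v4} : Set V) ∧ x ≠ v3 ∧ y ≠ v3 ∧
      (G.Adj x y ∨ (x = v1 ∧ G.Adj v3 y) ∨ (y = v1 ∧ G.Adj x v3))



/-! ### Auxiliary lemmas for the proof -/

lemma facePerm_apply' {G : SimpleGraph V} (rot : Equiv.Perm G.Dart) (d : G.Dart) :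
    facePerm rot d = rot d.symm := rfl

lemma triFace_adj {G : SimpleGraph V} (rot : Equiv.Perm G.Dart)
    (rot_fst : ∀ d : G.Dart, (rot d).fst = d.fst)
    (d : G.Dart) (h : Function.minimalPeriod (⇑(facePerm rot)) d = 3) :
    G.Adj d.snd (rot⁻¹ d).snd := by
  have h3 : (⇑(facePerm rot))^[3] d = d := by
    rw [← h]; exact Function.iterate_minimalPeriod
  have he : facePerm rot (facePerm rot (facePerm rot d)) = d := by
    simpa [Function.iterate_succ_apply'] using h3
  rw [facePerm_apply'] at he
  have h2 : rot⁻¹ d = (facePerm rot (facePerm rot d)).symm :=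
    Equiv.Perm.inv_eq_iff_eq.mpr he.symm
  have h2' : facePerm rot (facePerm rot d) = (rot⁻¹ d).symm := by
    rw [h2, Dart.symm_symm]
  have hfst : (facePerm rot d).fst = d.snd := by
    rw [facePerm_apply', rot_fst]; rfl
  have hsnd : (facePerm rot d).snd = (rot⁻¹ d).snd := by
    have : (facePerm rot (facePerm rot d)).fst = (facePerm rot d).snd := by
      rw [facePerm_apply', rot_fst]; rfl
    rw [h2'] at this
    exact this.symm.trans rfl
  have := (facePerm rot d).adj
  rwa [hfst, hsnd] at this

/-- **Theorem (Statement 9).** In a plane graph with no 4-cycle adjacent to a 5-cycle,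
every vertex of degree at least 4 is incident to at most `deg v - 2` faces of length 3. -/
theorem deg4_vertex_few_triangles_G1
    (V : Type) [Fintype V] (G : SimpleGraph V) (E : PlaneEmbedding G)
    (h45 : NoAdjCycles G 4 5) (v : V) (hv : 4 ≤ gdeg G v) :
    E.numTriFacesAt v ≤ gdeg G v - 2 := by
  classical
  have hdeg : gdeg G v = G.degree v := by
    rw [gdeg, Nat.card_eq_fintype_card]; exact G.card_neighborSet_eq_degree v
  set Dv : Finset G.Dart := Finset.univ.filter (fun d => d.fst = v) with hDv
  have hDvcard : Dv.card = gdeg G v := by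
    rw [hdeg]; exact G.dart_fst_fiber_card_eq_degree v
  set Tf : Finset G.Dart :=
    Finset.univ.filter (fun d => d.fst = v ∧ E.faceLength d = 3) with hTfdef
  have hTsub : Tf ⊆ Dv := by
    intro d hd
    simp only [hDv, hTfdef, Finset.mem_filter, Finset.mem_univ, true_and] at *
    exact hd.1
  have hA : E.numTriFacesAt v ≤ Tf.card := by
    have hinj : ∃ φ : {f : Quotient (sameCycleSetoid (facePerm E.rot)) //
        ∃ d : G.Dart, Quotient.mk (sameCycleSetoid (facePerm E.rot)) d = f ∧
          d.fst = v ∧ E.faceLength d = 3} → {d // d ∈ Tf}, Function.Injective φ := by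
      refine ⟨fun q => ⟨q.2.choose, ?_⟩, ?_⟩
      · simp only [hTfdef, Finset.mem_filter, Finset.mem_univ, true_and]
        exact ⟨q.2.choose_spec.2.1, q.2.choose_spec.2.2⟩
      · rintro ⟨f, hf⟩ ⟨f', hf'⟩ h
        simp only [Subtype.mk.injEq] at h ⊢
        rw [← hf.choose_spec.1, ← hf'.choose_spec.1, h]
    obtain ⟨φ, hφ⟩ := hinj
    calc E.numTriFacesAt v ≤ Nat.card {d // d ∈ Tf} :=
          Nat.card_le_card_of_injective φ hφ
      _ = Tf.card := by rw [Nat.card_eq_fintype_card, Fintype.card_coe]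
  suffices hB : Tf.card ≤ gdeg G v - 2 from hA.trans hB
  by_contra hcon
  push_neg at hcon
  have hTle : Tf.card ≤ Dv.card := Finset.card_le_card hTsub
  have hBcard : (Dv \ Tf).card ≤ 1 := by
    rw [Finset.card_sdiff_of_subset hTsub]; omega
  obtain ⟨d0, hd0Dv, hd0max⟩ : ∃ d0 ∈ Dv, ∀ d ∈ Dv, d ≠ d0 → d ∈ Tf := by
    rcases (Dv \ Tf).eq_empty_or_nonempty with hBemp | ⟨b, hb⟩
    · have hne : Dv.Nonempty := Finset.card_pos.mp (by omega)
      obtain ⟨d0, hd0⟩ := hne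
      refine ⟨d0, hd0, fun d hd _ => ?_⟩
      by_contra hdT
      exact absurd (Finset.mem_sdiff.mpr ⟨hd, hdT⟩)
        (by rw [hBemp]; exact Finset.notMem_empty d)
    · refine ⟨b, (Finset.mem_sdiff.mp hb).1, fun d hd hne => ?_⟩
      by_contra hdT
      exact hne (Finset.card_le_one.mp hBcard d (Finset.mem_sdiff.mpr ⟨hd, hdT⟩) b hb)
  have hd0fst : d0.fst = v := by
    simpa [hDv] using hd0Dv
  set dk : ℕ → G.Dart := fun k => (⇑E.rot)^[k] d0 with hdk
  have hfst : ∀ k, (dk k).fst = v := by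
    intro k; induction k with
    | zero => exact hd0fst
    | succ n ih =>
        show ((⇑E.rot)^[n+1] d0).fst = v
        rw [Function.iterate_succ_apply', E.rot_fst]; exact ih
  have hmem : ∀ k, dk k ∈ Dv := fun k => by
    simp only [hDv, Finset.mem_filter, Finset.mem_univ, true_and]; exact hfst k
  set m := Function.minimalPeriod (⇑E.rot) d0 with hm
  have hm0 : 0 < m := by
    apply Function.IsPeriodicPt.minimalPeriod_pos (orderOf_pos E.rot)
    show (⇑E.rot)^[orderOf E.rot] d0 = d0
    rw [← Equiv.Perm.coe_pow, pow_orderOf_eq_one]; rfl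
  have h4m : 4 ≤ m := by
    have hsub : Dv ⊆ (Finset.range m).image (fun k => (⇑E.rot)^[k] d0) := by
      intro d hd
      have hdfst : d.fst = v := by simpa [hDv] using hd
      have hsc : E.rot.SameCycle d0 d := E.rot_cycle d0 d (by rw [hd0fst, hdfst])
      obtain ⟨i, _, hpow⟩ := hsc.exists_pow_eq'
      refine Finset.mem_image.mpr ⟨i % m, Finset.mem_range.mpr (Nat.mod_lt _ hm0), ?_⟩
      rw [hm, Function.iterate_mod_minimalPeriod_eq, ← Equiv.Perm.coe_pow]
      exact hpow
    have hcard : Dv.card ≤ m :=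
      (Finset.card_le_card hsub).trans (Finset.card_image_le.trans (by simp))
    omega
  have hinj4 : ∀ i j, i < 4 → j < 4 → dk i = dk j → i = j := by
    intro i j hi hj hij
    exact Function.iterate_injOn_Iio_minimalPeriod
      (Set.mem_Iio.mpr (by omega)) (Set.mem_Iio.mpr (by omega)) hij
  have htri : ∀ k, 0 < k → k < 4 → E.faceLength (dk k) = 3 := by
    intro k hk hk4
    have hkd0 : dk k ≠ d0 := by
      intro h
      have : k = 0 := hinj4 k 0 hk4 (by norm_num) h
      omega
    have hmemT := hd0max _ (hmem k) hkd0
    simp only [hTfdef, Finset.mem_filter, Finset.mem_univ, true_and] at hmemT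
    exact hmemT.2
  have hprev : ∀ k, E.rot⁻¹ (dk (k+1)) = dk k := by
    intro k
    have hstep : E.rot (dk k) = dk (k+1) := (Function.iterate_succ_apply' _ _ _).symm
    rw [← hstep, Equiv.Perm.inv_def, Equiv.symm_apply_apply]
  have hadj : ∀ k, k < 3 → G.Adj (dk (k+1)).snd (dk k).snd := by
    intro k hk
    have h3 : Function.minimalPeriod (⇑(facePerm E.rot)) (dk (k+1)) = 3 :=
      htri (k+1) (by omega) (by omega)
    have := triFace_adj E.rot E.rot_fst (dk (k+1)) h3
    rwa [hprev k] at this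
  set a : ℕ → V := fun k => (dk k).snd with ha
  have hvAdj : ∀ k, G.Adj v (a k) := fun k => (hfst k) ▸ (dk k).adj
  have hane : ∀ i j, i < 4 → j < 4 → i ≠ j → a i ≠ a j := by
    intro i j hi hj hij hsnd
    apply hij
    apply hinj4 i j hi hj
    apply Dart.ext
    exact Prod.ext ((hfst i).trans (hfst j).symm) hsnd
  have havne : ∀ k, a k ≠ v := fun k => (hvAdj k).ne'
  have had10 : G.Adj (a 1) (a 0) := hadj 0 (by norm_num)
  have had21 : G.Adj (a 2) (a 1) := hadj 1 (by norm_num)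
  have had32 : G.Adj (a 3) (a 2) := hadj 2 (by norm_num)
  have hne' : ∀ i j, i < 4 → j < 4 → i ≠ j → ¬ (a i = a j) := hane
  have h01 := hane 0 1 (by norm_num) (by norm_num) (by norm_num)
  have h02 := hane 0 2 (by norm_num) (by norm_num) (by norm_num)
  have h03 := hane 0 3 (by norm_num) (by norm_num) (by norm_num)
  have h12 := hane 1 2 (by norm_num) (by norm_num) (by norm_num)
  have h13 := hane 1 3 (by norm_num) (by norm_num) (by norm_num)
  have h23 := hane 2 3 (by norm_num) (by norm_num) (by norm_num)
  have h10 := h01.symm; have h20 := h02.symm; have h30 := h03.symm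
  have h21 := h12.symm; have h31 := h13.symm; have h32 := h23.symm
  have n0 := havne 0; have n1 := havne 1; have n2 := havne 2; have n3 := havne 3
  have m0 := n0.symm; have m1 := n1.symm; have m2 := n2.symm; have m3 := n3.symm
  clear hane havne hne'
  let c4 : G.Walk v v :=
    Walk.cons (hvAdj 1) (Walk.cons had21.symm
      (Walk.cons had32.symm (Walk.cons (hvAdj 3).symm Walk.nil)))
  let c5 : G.Walk v v :=
    Walk.cons (hvAdj 0) (Walk.cons had10.symm
      (Walk.cons had21.symm
        (Walk.cons had32.symm (Walk.cons (hvAdj 3).symm Walk.nil))))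
  have hc4 : c4.IsCycle := by
    simp only [c4, Walk.isCycle_def, Walk.isTrail_def, Walk.edges_cons, Walk.edges_nil,
      Walk.support_cons, Walk.support_nil, List.tail_cons, List.nodup_cons, List.mem_cons,
      List.not_mem_nil, or_false, List.nodup_nil, and_true, Sym2.eq, Sym2.rel_iff',
      Prod.mk.injEq, Prod.swap_prod_mk, ne_eq, not_false_eq_true, true_and]
    refine ⟨?_, ?_, ?_⟩
    · tauto
    · exact fun h => by cases h
    · tauto
  have hc5 : c5.IsCycle := by
    simp only [c5, Walk.isCycle_def, Walk.isTrail_def, Walk.edges_cons, Walk.edges_nil,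
      Walk.support_cons, Walk.support_nil, List.tail_cons, List.nodup_cons, List.mem_cons,
      List.not_mem_nil, or_false, List.nodup_nil, and_true, Sym2.eq, Sym2.rel_iff',
      Prod.mk.injEq, Prod.swap_prod_mk, ne_eq, not_false_eq_true, true_and]
    refine ⟨?_, ?_, ?_⟩
    · tauto
    · exact fun h => by cases h
    · tauto
  have hlen4 : c4.length = 4 := by simp [c4]
  have hlen5 : c5.length = 5 := by simp [c5]
  have hshare : ShareEdge c4 c5 := by
    refine ⟨s(a 1, a 2), ?_, ?_⟩ <;>
      simp [c4, c5, Walk.edges_cons, Sym2.eq_swap]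
  exact h45 v v c4 c5 hc4 hc5 hlen4 hlen5 hshare
end

section
/- Let G be a planar graph in which no 4-cycle is adjacent to a 5-cycle. Then every cycle of G of length at most 7 is good; that is, for every cycle C of length at most 7, no vertex of degree at least 4 in V(G)\V(C) has at least four neighbors on C. -/
open SimpleGraph

universe u

variable {V : Type u}

section HelpersG1

private def chkG1 (n : ℕ) : Bool :=
  (List.range n).all fun i1 => (List.range n).all fun i2 =>
  (List.range n).all fun i3 => (List.range n).all fun i4 =>
    (i1 == i2 || i1 == i3 || i1 == i4 || i2 == i3 || i2 == i4 || i3 == i4) ||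
    ([i1,i2,i3,i4]).any fun y => ([i1,i2,i3,i4]).any fun x => ([i1,i2,i3,i4]).any fun z =>
      (x == (y+2) % n || y == (x+2) % n) &&
      (z == (y+3) % n || y == (z+3) % n)

set_option maxHeartbeats 3000000 in
private lemma chkG1_le7 (n : ℕ) (hn : n ≤ 7) : chkG1 n = true := by
  interval_cases n <;> decide

private lemma keyG1 (n i1 i2 i3 i4 : ℕ) (hn : n ≤ 7) (h1 : i1 < n) (h2 : i2 < n)
    (h3 : i3 < n) (h4 : i4 < n) (d12 : i1 ≠ i2) (d13 : i1 ≠ i3) (d14 : i1 ≠ i4)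
    (d23 : i2 ≠ i3) (d24 : i2 ≠ i4) (d34 : i3 ≠ i4) :
    ∃ y x z : ℕ,
      (y = i1 ∨ y = i2 ∨ y = i3 ∨ y = i4) ∧
      (x = i1 ∨ x = i2 ∨ x = i3 ∨ x = i4) ∧
      (z = i1 ∨ z = i2 ∨ z = i3 ∨ z = i4) ∧
      (x = (y+2) % n ∨ y = (x+2) % n) ∧ (z = (y+3) % n ∨ y = (z+3) % n) := by
  have hc := chkG1_le7 n hn
  simp only [chkG1, List.all_eq_true, List.mem_range] at hc
  have h := hc i1 h1 i2 h2 i3 h3 i4 h4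
  simp only [Bool.or_eq_true, List.any_eq_true, Bool.and_eq_true, beq_iff_eq,
    List.mem_cons, List.mem_singleton, List.not_mem_nil, or_false] at h
  rcases h with (((((h|h)|h)|h)|h)|h) | ⟨y, hy, x, hx, z, hz, hxy, hzy⟩
  · exact absurd h d12
  · exact absurd h d13
  · exact absurd h d14
  · exact absurd h d23
  · exact absurd h d24
  · exact absurd h d34
  · exact ⟨y, x, z, hy, hx, hz, hxy, hzy⟩

lemma cycle4 {V : Type} {G : SimpleGraph V} {w b c d : V}
    (h1 : G.Adj w b) (h2 : G.Adj b c) (h3 : G.Adj c d) (h4 : G.Adj d w)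
    (hbd : b ≠ d) (hwc : w ≠ c) :
    ∃ p : G.Walk w w, p.IsCycle ∧ p.length = 4 ∧ s(w,b) ∈ p.edges ∧ s(w,d) ∈ p.edges := by
  have hwb := h1.ne
  have hbc := h2.ne
  have hcd := h3.ne
  have hdw := h4.ne
  refine ⟨.cons h1 (.cons h2 (.cons h3 (.cons h4 .nil))), ?_, by simp, by simp, by simp [Sym2.eq_swap]⟩
  rw [Walk.isCycle_def]
  refine ⟨?_, by simp, ?_⟩
  · rw [Walk.isTrail_def]
    simp [Sym2.mk_eq_mk_iff]
    aesop
  · simp [List.nodup_cons]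
    aesop

lemma cycle5 {V : Type} {G : SimpleGraph V} {w b c d e : V}
    (h1 : G.Adj w b) (h2 : G.Adj b c) (h3 : G.Adj c d) (h4 : G.Adj d e) (h5 : G.Adj e w)
    (hwc : w ≠ c) (hwd : w ≠ d) (hbd : b ≠ d) (hbe : b ≠ e) (hce : c ≠ e) :
    ∃ p : G.Walk w w, p.IsCycle ∧ p.length = 5 ∧ s(w,b) ∈ p.edges ∧ s(w,e) ∈ p.edges := by
  have hwb := h1.ne
  have hbc := h2.ne
  have hcd := h3.ne
  have hde := h4.ne
  have hew := h5.ne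
  refine ⟨.cons h1 (.cons h2 (.cons h3 (.cons h4 (.cons h5 .nil)))), ?_, by simp, by simp,
    by simp [Sym2.eq_swap]⟩
  rw [Walk.isCycle_def]
  refine ⟨?_, by simp, ?_⟩
  · rw [Walk.isTrail_def]
    simp [Sym2.mk_eq_mk_iff]
    aesop
  · simp [List.nodup_cons]
    aesop

lemma four_of_card {α : Type} [DecidableEq α] (s : Finset α) (h : 4 ≤ s.card) :
    ∃ u1 u2 u3 u4, u1 ∈ s ∧ u2 ∈ s ∧ u3 ∈ s ∧ u4 ∈ s ∧
      u1 ≠ u2 ∧ u1 ≠ u3 ∧ u1 ≠ u4 ∧ u2 ≠ u3 ∧ u2 ≠ u4 ∧ u3 ≠ u4 := by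
  obtain ⟨u1, hu1⟩ := Finset.card_pos.mp (show 0 < s.card by omega)
  have h1 : 3 ≤ (s.erase u1).card := by
    rw [Finset.card_erase_of_mem hu1]; omega
  obtain ⟨u2, hu2⟩ := Finset.card_pos.mp (show 0 < (s.erase u1).card by omega)
  have h2 : 2 ≤ ((s.erase u1).erase u2).card := by
    rw [Finset.card_erase_of_mem hu2]; omega
  obtain ⟨u3, hu3⟩ := Finset.card_pos.mp (show 0 < ((s.erase u1).erase u2).card by omega)
  have h3 : 1 ≤ (((s.erase u1).erase u2).erase u3).card := by
    rw [Finset.card_erase_of_mem hu3]; omega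
  obtain ⟨u4, hu4⟩ :=
    Finset.card_pos.mp (show 0 < (((s.erase u1).erase u2).erase u3).card by omega)
  simp only [Finset.mem_erase] at hu2 hu3 hu4
  exact ⟨u1, u2, u3, u4, hu1, hu2.2, hu3.2.2, hu4.2.2.2,
    fun e => hu2.1 e.symm, fun e => hu3.2.1 e.symm, fun e => hu4.2.2.1 e.symm,
    fun e => hu3.1 e.symm, fun e => hu4.2.1 e.symm, fun e => hu4.1 e.symm⟩

lemma list_cyclic {V : Type} {G : SimpleGraph V} {a : V} (sup : List V)
    (hchain : List.Chain' G.Adj sup)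
    (hne : sup ≠ [])
    (hhead : sup.head hne = a)
    (hlast : sup.getLast hne = a)
    (hnodup : sup.tail.Nodup)
    (hlen2 : 4 ≤ sup.length) :
    ∃ v : ℕ → V,
      (∀ i, G.Adj (v i) (v (i+1))) ∧
      (∀ i, v i ∈ sup) ∧
      (∀ i, v (i % (sup.length - 1)) = v i) ∧
      (∀ i j, i < sup.length - 1 → j < sup.length - 1 → v i = v j → i = j) ∧
      (∀ u, u ∈ sup → ∃ i, i < sup.length - 1 ∧ v i = u) := by
  classical
  set n := sup.length - 1 with hn
  have hnpos : 0 < n := by omega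
  have hdlen : sup.dropLast.length = n := by rw [List.length_dropLast]
  have hidx : ∀ i : ℕ, i % n < sup.dropLast.length := by
    intro i; rw [hdlen]; exact Nat.mod_lt _ hnpos
  have hgetd : ∀ (j : ℕ) (hj : j < n), sup.dropLast[j]'(by omega) = sup[j]'(by omega) :=
    fun j hj => List.getElem_dropLast _
  have hlast' : sup[n]'(by omega) = a := by
    rw [List.getLast_eq_getElem] at hlast
    convert hlast using 2
  have h0 : sup[0]'(by omega) = a := by
    rw [← List.head_eq_getElem]; exact hhead
  have hadjsup : ∀ (j : ℕ) (hj : j < n),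
      G.Adj (sup[j]'(by omega)) (sup[j+1]'(by omega)) := by
    intro j hj
    have := List.isChain_iff_getElem.mp hchain j (by omega)
    simpa using this
  have htne : sup.tail ≠ [] := by
    intro he
    have := congrArg List.length he
    rw [List.length_tail] at this
    simp at this; omega
  have hNodupD : sup.dropLast.Nodup := by
    have h1 : sup.tail.getLast htne = a := by
      rw [List.getLast_eq_getElem, List.getElem_tail,
        getElem_congr_idx (show sup.tail.length - 1 + 1 = n by rw [List.length_tail]; omega)]
      exact hlast'
    have h2 : sup.tail = sup.tail.dropLast ++ [a] := by
      conv_lhs => rw [← List.dropLast_append_getLast htne]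
      rw [h1]
    have h3 : sup.dropLast = a :: sup.tail.dropLast := by
      conv_lhs => rw [← List.cons_head_tail hne]
      rw [List.dropLast_cons_of_ne_nil htne, hhead]
    rw [h2] at hnodup
    rw [h3]
    exact (List.perm_append_singleton a _).nodup_iff.mp hnodup
  have hsucc : ∀ i : ℕ, (i + 1) % n = (i % n + 1) % n := by
    intro i; rw [Nat.mod_add_mod]
  refine ⟨fun i => sup.dropLast[i % n]'(hidx i), ?_, ?_, ?_, ?_, ?_⟩
  · intro i
    have hj : i % n < n := Nat.mod_lt _ hnpos
    by_cases hc : i % n + 1 < n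
    · have h1 : (i+1) % n = i % n + 1 := by
        rw [hsucc, Nat.mod_eq_of_lt hc]
      simp only [h1]
      rw [hgetd _ hj, hgetd _ hc]
      exact hadjsup _ (by omega)
    · have hin : i % n = n - 1 := by omega
      have h1 : (i+1) % n = 0 := by
        rw [hsucc, hin, show n - 1 + 1 = n by omega, Nat.mod_self]
      simp only [h1]
      rw [hgetd _ hj, hgetd _ hnpos, h0]
      have hA := hadjsup (n-1) (by omega)
      rw [getElem_congr_idx (show n - 1 + 1 = n by omega), hlast'] at hA
      rw [getElem_congr_idx hin]
      exact hA
  · intro i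
    exact List.mem_of_mem_dropLast (List.getElem_mem _)
  · intro i
    simp only [Nat.mod_mod_of_dvd _ dvd_rfl]
  · intro i j hi hj hv
    simp only [Nat.mod_eq_of_lt hi, Nat.mod_eq_of_lt hj] at hv
    exact (hNodupD.getElem_inj_iff).mp hv
  · intro u hu
    have hsplit : sup = sup.dropLast ++ [a] := by
      conv_lhs => rw [← List.dropLast_append_getLast hne]
      rw [hlast]
    have hu' : u ∈ sup.dropLast := by
      rcases List.mem_append.mp (hsplit ▸ hu) with h | h
      · exact h
      · have hua : u = a := by simpa using h
        have : sup.dropLast[0]'(by omega) = a := by rw [hgetd 0 hnpos]; exact h0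
        rw [hua, ← this]
        exact List.getElem_mem _
    have hlt : List.idxOf u sup.dropLast < n := by
      rw [← hdlen]; exact List.idxOf_lt_length_iff.mpr hu'
    refine ⟨List.idxOf u sup.dropLast, hlt, ?_⟩
    have hmod : List.idxOf u sup.dropLast % n = List.idxOf u sup.dropLast :=
      Nat.mod_eq_of_lt hlt
    simp only [hmod]
    exact List.getElem_idxOf _

end HelpersG1

/-- **Theorem (Statement 13).** In a planar graph with no 4-cycle adjacent to a 5-cycle,
every cycle of length at most 7 is good: no vertex of degree at least 4 outside the
cycle has at least four neighbours on it. -/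
theorem cycles_le7_good_G1
    (V : Type) [Fintype V] (G : SimpleGraph V)
    (hplanar : IsPlanar G) (h45 : NoAdjCycles G 4 5) :
    ∀ (a : V) (C : G.Walk a a), C.IsCycle → C.length ≤ 7 → IsGoodCycle G C := by
  classical
  intro a C hC hlen hbad
  obtain ⟨w, hw, -, hcard⟩ := hbad
  rw [Nat.card_coe_set_eq, Set.ncard_eq_toFinset_card'] at hcard
  obtain ⟨u1, u2, u3, u4, m1, m2, m3, m4, d12, d13, d14, d23, d24, d34⟩ :=
    four_of_card _ hcard
  simp only [Set.mem_toFinset, Set.mem_setOf_eq] at m1 m2 m3 m4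
  have hne : C.support ≠ [] := C.support_ne_nil
  have hhead : C.support.head hne = a := by
    rw [List.head_eq_getElem, List.getElem_of_eq C.support_eq_cons]
    exact List.getElem_cons_zero _ _ _
  have hsuplen : C.support.length = C.length + 1 := C.length_support
  have hn3 : 3 ≤ C.length := hC.three_le_length
  have hlen4 : 4 ≤ C.support.length := by omega
  obtain ⟨v, hadj, hvmem, hvmod, hvinj, hvidx⟩ :=
    list_cyclic C.support C.isChain_adj_support hne hhead C.getLast_support hC.2 hlen4
  set n := C.support.length - 1 with hn
  have hn7 : n ≤ 7 := by omega
  obtain ⟨i1, hi1, hv1⟩ := hvidx u1 m1.1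
  obtain ⟨i2, hi2, hv2⟩ := hvidx u2 m2.1
  obtain ⟨i3, hi3, hv3⟩ := hvidx u3 m3.1
  obtain ⟨i4, hi4, hv4⟩ := hvidx u4 m4.1
  have e12 : i1 ≠ i2 := fun e => d12 (by rw [← hv1, ← hv2, e])
  have e13 : i1 ≠ i3 := fun e => d13 (by rw [← hv1, ← hv3, e])
  have e14 : i1 ≠ i4 := fun e => d14 (by rw [← hv1, ← hv4, e])
  have e23 : i2 ≠ i3 := fun e => d23 (by rw [← hv2, ← hv3, e])
  have e24 : i2 ≠ i4 := fun e => d24 (by rw [← hv2, ← hv4, e])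
  have e34 : i3 ≠ i4 := fun e => d34 (by rw [← hv3, ← hv4, e])
  have hn4 : 4 ≤ n := by omega
  obtain ⟨y, x, z, hy, hx, hz, hxy, hzy⟩ :=
    keyG1 n i1 i2 i3 i4 hn7 hi1 hi2 hi3 hi4 e12 e13 e14 e23 e24 e34
  have hadjw : ∀ m : ℕ, (m = i1 ∨ m = i2 ∨ m = i3 ∨ m = i4) → G.Adj w (v m) := by
    rintro m (rfl | rfl | rfl | rfl)
    · rw [hv1]; exact m1.2
    · rw [hv2]; exact m2.2
    · rw [hv3]; exact m3.2
    · rw [hv4]; exact m4.2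
  have hwv : ∀ i, w ≠ v i := fun i e => hw (e ▸ hvmem i)
  have hne_mod : ∀ i k : ℕ, 0 < k → k < n → v i ≠ v (i + k) := by
    intro i k hk hk' e
    have h1 : v (i % n) = v ((i + k) % n) := by rw [hvmod, hvmod]; exact e
    have h2 := hvinj _ _ (Nat.mod_lt _ (by omega)) (Nat.mod_lt _ (by omega)) h1
    have hr : i % n < n := Nat.mod_lt _ (by omega)
    have h3 : (i + k) % n = (i % n + k) % n := by
      rw [Nat.add_mod, Nat.mod_eq_of_lt hk']
    rcases lt_or_ge (i % n + k) n with h | h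
    · rw [Nat.mod_eq_of_lt h] at h3; omega
    · have h4 : (i % n + k) % n = i % n + k - n := by
        rw [Nat.mod_eq_sub_mod h, Nat.mod_eq_of_lt (by omega)]
      omega
  have h4cyc : ∃ p : G.Walk w w, p.IsCycle ∧ p.length = 4 ∧ s(w, v y) ∈ p.edges := by
    rcases hxy with hxy | hxy
    · have hvx : v x = v (y + 2) := by rw [hxy]; exact hvmod _
      obtain ⟨p, hc', hl', he1, -⟩ := cycle4 (hadjw y hy) (hadj y)
        (show G.Adj (v (y+1)) (v (y+2)) from hadj (y+1))
        (show G.Adj (v (y+2)) w from (hvx ▸ hadjw x hx).symm)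
        (hne_mod y 2 (by omega) (by omega)) (hwv (y+1))
      exact ⟨p, hc', hl', he1⟩
    · have hvy : v (x + 2) = v y := by rw [hxy]; exact (hvmod _).symm
      obtain ⟨p, hc', hl', -, he2⟩ := cycle4 (hadjw x hx) (hadj x)
        (show G.Adj (v (x+1)) (v (x+2)) from hadj (x+1))
        (show G.Adj (v (x+2)) w from (hvy ▸ hadjw y hy).symm)
        (hne_mod x 2 (by omega) (by omega)) (hwv (x+1))
      rw [hvy] at he2
      exact ⟨p, hc', hl', he2⟩
  have h5cyc : ∃ p : G.Walk w w, p.IsCycle ∧ p.length = 5 ∧ s(w, v y) ∈ p.edges := by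
    rcases hzy with hzy | hzy
    · have hvz : v z = v (y + 3) := by rw [hzy]; exact hvmod _
      obtain ⟨p, hc', hl', he1, -⟩ := cycle5 (hadjw y hy) (hadj y)
        (show G.Adj (v (y+1)) (v (y+2)) from hadj (y+1))
        (show G.Adj (v (y+2)) (v (y+3)) from hadj (y+2))
        (show G.Adj (v (y+3)) w from (hvz ▸ hadjw z hz).symm)
        (hwv (y+1)) (hwv (y+2))
        (hne_mod y 2 (by omega) (by omega))
        (hne_mod y 3 (by omega) (by omega))
        (hne_mod (y+1) 2 (by omega) (by omega))
      exact ⟨p, hc', hl', he1⟩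
    · have hvy : v (z + 3) = v y := by rw [hzy]; exact (hvmod _).symm
      obtain ⟨p, hc', hl', -, he2⟩ := cycle5 (hadjw z hz) (hadj z)
        (show G.Adj (v (z+1)) (v (z+2)) from hadj (z+1))
        (show G.Adj (v (z+2)) (v (z+3)) from hadj (z+2))
        (show G.Adj (v (z+3)) w from (hvy ▸ hadjw y hy).symm)
        (hwv (z+1)) (hwv (z+2))
        (hne_mod z 2 (by omega) (by omega))
        (hne_mod z 3 (by omega) (by omega))
        (hne_mod (z+1) 2 (by omega) (by omega))
      rw [hvy] at he2
      exact ⟨p, hc', hl', he2⟩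
  obtain ⟨p4, hp4c, hp4l, hp4e⟩ := h4cyc
  obtain ⟨p5, hp5c, hp5l, hp5e⟩ := h5cyc
  exact h45 w w p4 p5 hp4c hp5c hp4l hp5l ⟨s(w, v y), hp4e, hp5e⟩
end
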